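/- Let ℓ ∈ ℕ and let g^{(ℓ)} be defined by g^{(ℓ)}_n := √n · ∏_{j=1}^{ℓ−1}(n−j) for integers n ≥ 0 and g^{(ℓ)}_n := 0 for n < 0. Then ((−Δ)^{ℓ−k}∂^k g^{(ℓ)})_n > 0 for all integers n ≥ ℓ−k and all 0 ≤ k < ℓ. In particular ((−Δ)^ℓ g^{(ℓ)})_n > 0 for all n ≥ ℓ. -/

import Mathlib

noncomputable section

open scoped ENNReal

namespace HRB

/-- discrete gradient `(∇u)_n = u_n - u_{n-1}` -/
def grad (u : ℤ → ℂ) : ℤ → ℂ := fun n => u n - u (n - 1)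

/-- discrete divergence (forward difference) `(∂u)_n = u_{n+1} - u_n` -/
def fdiff (u : ℤ → ℂ) : ℤ → ℂ := fun n => u (n + 1) - u n

/-- averaging operator `(Mu)_n = (u_n + u_{n+1})/2` -/
def avg (u : ℤ → ℂ) : ℤ → ℂ := fun n => (u n + u (n + 1)) / 2

/-- negative discrete Laplacian `((-Δ)u)_n = 2u_n - u_{n-1} - u_{n+1}` -/
def negLap (u : ℤ → ℂ) : ℤ → ℂ := fun n => 2 * u n - u (n - 1) - u (n + 1)

/-- `(-Δ)^{ℓ/2}`: equal to `(-Δ)^m` if `ℓ = 2m` and to `∇ ∘ (-Δ)^m` if `ℓ = 2m+1`. -/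
def halfPow (l : ℕ) (u : ℤ → ℂ) : ℤ → ℂ :=
  if l % 2 = 0 then negLap^[l / 2] u else grad (negLap^[l / 2] u)

def gradR (u : ℤ → ℝ) : ℤ → ℝ := fun n => u n - u (n - 1)

def fdiffR (u : ℤ → ℝ) : ℤ → ℝ := fun n => u (n + 1) - u n

def negLapR (u : ℤ → ℝ) : ℤ → ℝ := fun n => 2 * u n - u (n - 1) - u (n + 1)

/-- `u ∈ H^ℓ` -/
def memH (l : ℤ) (u : ℤ → ℂ) : Prop := ∀ n : ℤ, n < l → u n = 0

/-- `u ∈ 𝓗₀^ℓ`: compactly supported elements of `H^ℓ` -/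
def memH0 (l : ℤ) (u : ℤ → ℂ) : Prop :=
  memH l u ∧ ∃ N : ℤ, ∀ n : ℤ, N ≤ n → u n = 0

/-- real-valued sequences in `H^ℓ` -/
def memHR (l : ℤ) (g : ℤ → ℝ) : Prop := ∀ n : ℤ, n < l → g n = 0

/-- `Σ_{n=a}^∞ f(n)` (as an unordered real `tsum`) -/
def qsum (a : ℤ) (f : ℤ → ℝ) : ℝ := ∑' n : ℤ, if a ≤ n then f n else 0

/-- `Σ_{n=a}^∞ f(n)` as a sum in `ℝ≥0∞` (for nonnegative `f`) -/
def esum (a : ℤ) (f : ℤ → ℝ) : ℝ≥0∞ :=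
  ∑' n : ℤ, if a ≤ n then ENNReal.ofReal (f n) else 0

/-- `⌈ℓ/2⌉` -/
def ceilHalf (l : ℕ) : ℤ := (((l + 1) / 2 : ℕ) : ℤ)

/-- `Σ_{n=⌈ℓ/2⌉}^∞ |((-Δ)^{ℓ/2}u)_n|²` -/
def energy (l : ℕ) (u : ℤ → ℂ) : ℝ :=
  qsum (ceilHalf l) fun n => ‖halfPow l u n‖ ^ 2

def eenergy (l : ℕ) (u : ℤ → ℂ) : ℝ≥0∞ :=
  esum (ceilHalf l) fun n => ‖halfPow l u n‖ ^ 2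

/-- `Σ_{n=l}^∞ ρ_n |u_n|²` -/
def wsum (l : ℤ) (ρ : ℤ → ℝ) (u : ℤ → ℂ) : ℝ := qsum l fun n => ρ n * ‖u n‖ ^ 2

def ewsum (l : ℤ) (ρ : ℤ → ℝ) (u : ℤ → ℂ) : ℝ≥0∞ := esum l fun n => ρ n * ‖u n‖ ^ 2

/-- Assumption (A1) -/
def A1 (l : ℕ) (g : ℤ → ℝ) : Prop :=
  memHR l g ∧ ∀ k : ℕ, k < l → ∀ n : ℤ, (l : ℤ) - (k : ℤ) ≤ n → 0 < fdiffR^[k] g n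

/-- Assumption (A2) -/
def A2 (l : ℕ) (g : ℤ → ℝ) : Prop :=
  ∀ k : ℕ, 1 ≤ k → k < l → ∀ n : ℤ, (l : ℤ) + 1 - (k : ℤ) ≤ n →
    0 ≤ negLapR^[l - k] (fdiffR^[k] g) n

/-- Assumption (A2') -/
def A2' (l : ℕ) (g : ℤ → ℝ) : Prop := ∀ n : ℤ, (l : ℤ) ≤ n → 0 ≤ negLapR^[l] g n

/-- Asymptotic expansion (Exp_s):
`g_n = Σ_{j=0}^{2ℓ} α_j n^{ℓ-j-s} + O(n^{-ℓ-1-s})` as `n → ∞`, with `α_0 ≠ 0`. -/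
def ExpS (l : ℕ) (g : ℤ → ℝ) (s : ℝ) : Prop :=
  ∃ α : ℕ → ℝ, α 0 ≠ 0 ∧ ∃ C : ℝ, ∃ N : ℤ, ∀ n : ℤ, N ≤ n →
    |g n - ∑ j ∈ Finset.range (2 * l + 1), α j * (n : ℝ) ^ ((l : ℝ) - (j : ℝ) - s)| ≤
      C * (n : ℝ) ^ (-(l : ℝ) - 1 - s)

/-- the weight `ρ(g)_n = ((-Δ)^ℓ g)_n / g_n` -/
def rho (l : ℕ) (g : ℤ → ℝ) : ℤ → ℝ := fun n => negLapR^[l] g n / g n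

/-- the `n`-th term of the remainder `𝓡_k^{(ℓ)}(g;u)` -/
def remTerm (l k : ℕ) (g : ℤ → ℝ) (u : ℤ → ℂ) : ℤ → ℝ := fun n =>
  (if k + 1 = l then 1
    else negLapR^[l - 1 - k] (fdiffR^[k + 1] g) n / fdiffR^[k + 1] g n) *
  ‖(Real.sqrt (fdiffR^[k] g n / fdiffR^[k] g (n + 1)) : ℂ) * fdiff^[k] u (n + 1) -
    (Real.sqrt (fdiffR^[k] g (n + 1) / fdiffR^[k] g n) : ℂ) * fdiff^[k] u n‖ ^ 2

/-- the remainder `𝓡_k^{(ℓ)}(g;u)` -/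
def rem (l k : ℕ) (g : ℤ → ℝ) (u : ℤ → ℂ) : ℝ :=
  qsum ((l : ℤ) - (k : ℤ)) (remTerm l k g u)

def erem (l k : ℕ) (g : ℤ → ℝ) (u : ℤ → ℂ) : ℝ≥0∞ :=
  esum ((l : ℤ) - (k : ℤ)) (remTerm l k g u)

/-- `ρ` is a discrete Hardy–Rellich–Birman weight for the power `ℓ` -/
def IsHRBWeight (l : ℕ) (ρ : ℤ → ℝ) : Prop :=
  (∀ n : ℤ, (l : ℤ) ≤ n → 0 ≤ ρ n) ∧
  ∀ u : ℤ → ℂ, memH0 l u → wsum l ρ u ≤ energy l u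

/-- criticality of the weight `ρ` -/
def IsCritical (l : ℕ) (ρ : ℤ → ℝ) : Prop :=
  ∀ ρ' : ℤ → ℝ, (∀ n : ℤ, (l : ℤ) ≤ n → 0 ≤ ρ' n) →
    (∀ u : ℤ → ℂ, memH0 l u → wsum l ρ' u ≤ energy l u) →
    (∀ n : ℤ, (l : ℤ) ≤ n → ρ n ≤ ρ' n) →
    ∀ n : ℤ, (l : ℤ) ≤ n → ρ' n = ρ n

/-- optimality near infinity of the weight `ρ` -/
def IsOptNearInfinity (l : ℕ) (ρ : ℤ → ℝ) : Prop :=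
  ∀ M : ℤ, (l : ℤ) ≤ M → ∀ ε : ℝ, 0 < ε →
    ∃ u : ℤ → ℂ, memH0 M u ∧ energy l u < (1 + ε) * wsum l ρ u

/-- non-attainability of the weight `ρ` -/
def IsNonAttainable (l : ℕ) (ρ : ℤ → ℝ) : Prop :=
  ∀ u : ℤ → ℂ, memH l u → ewsum l ρ u ≠ ⊤ → eenergy l u = ewsum l ρ u →
    u = 0

/-- `g^{(ℓ)}_n = √n ∏_{j=1}^{ℓ-1} (n-j)` for `n ≥ 0`, zero for `n < 0` -/
def gseq (l : ℕ) : ℤ → ℝ := fun n =>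
  if n < 0 then 0 else Real.sqrt (n : ℝ) * ∏ j ∈ Finset.Icc 1 (l - 1), ((n : ℝ) - (j : ℝ))

/-- the optimal weight `ρ^{(ℓ)}` -/
def rhoSeq (l : ℕ) : ℤ → ℝ := rho l (gseq l)

/-- `g^{(ℓ)}(q)_n = n^q ∏_{j=1}^{ℓ-1}(n-j)` for `n ≥ 0`, zero for `n < 0` -/
def gq (l : ℕ) (q : ℝ) : ℤ → ℝ := fun n =>
  if n < 0 then 0 else (n : ℝ) ^ q * ∏ j ∈ Finset.Icc 1 (l - 1), ((n : ℝ) - (j : ℝ))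

/-- `h_n = n^{ℓ-1/2}` for `n ≥ 0`, zero for `n < 0` -/
def hseq (l : ℕ) : ℤ → ℝ := fun n =>
  if n < 0 then 0 else (n : ℝ) ^ ((l : ℝ) - 1 / 2)

/-- generalized binomial coefficient `C(ν,m) = ν(ν-1)⋯(ν-m+1)/m!` -/
def genBinom (ν : ℝ) (m : ℕ) : ℝ := (∏ i ∈ Finset.range m, (ν - (i : ℝ))) / (m.factorial : ℝ)

/-- (signed) Stirling numbers of the first kind `s(n,k)`, extended by `0` for `k ≤ 0` -/
def stirling1 (n : ℕ) (k : ℤ) : ℝ :=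
  if k ≤ 0 then 0
  else (-1 : ℝ) ^ (n + k.toNat) *
    ∑ t ∈ (Finset.Icc 1 (n - 1)).powersetCard (n - k.toNat), ∏ i ∈ t, (i : ℝ)

/-- `X_m^{(ℓ)} = Σ_{j=-ℓ}^{ℓ} C(2ℓ,ℓ+j)(-1)^j j^m`, with `X_0^{(ℓ)} = 0` -/
def Xcoef (l m : ℕ) : ℝ :=
  if m = 0 then 0
  else ∑ j ∈ Finset.Icc (-(l : ℤ)) (l : ℤ),
    (((2 * l).choose ((l : ℤ) + j).toNat : ℕ) : ℝ) * (-1 : ℝ) ^ j * ((j : ℝ)) ^ m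

/-- the coefficients `r_k^{(ℓ)}` -/
def rcoef (l k : ℕ) : ℝ :=
  ∑ m ∈ Finset.Icc (2 * l) k,
    genBinom ((l : ℝ) + (m : ℝ) - (k : ℝ) - 1 / 2) m * stirling1 l ((l : ℤ) + (m : ℤ) - (k : ℤ)) *
      Xcoef l m

/-- Pochhammer symbol `(x)_ℓ = x(x+1)⋯(x+ℓ-1)` -/
def poch (x : ℝ) (l : ℕ) : ℝ := ∏ i ∈ Finset.range l, (x + (i : ℝ))


/-- forward difference on real functions -/
def ddiff (F : ℝ → ℝ) : ℝ → ℝ := fun x => F (x + 1) - F x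

lemma ddiff_iter_cont (M : ℕ) : ∀ (f : ℝ → ℝ) (b : ℝ), ∀ a : ℝ,
    ContinuousOn f (Set.Icc a b) → ContinuousOn (ddiff^[M] f) (Set.Icc a (b - M)) := by
  induction M with
  | zero => intro f b a h; simpa using h
  | succ M ih =>
    intro f b a h
    rw [Function.iterate_succ_apply]
    have h1 : ContinuousOn (ddiff f) (Set.Icc a (b - 1)) := by
      apply ContinuousOn.sub
      · exact h.comp (continuous_add_right 1).continuousOn
          (fun x hx => ⟨by linarith [hx.1], by linarith [hx.2]⟩)
      · exact h.mono (Set.Icc_subset_Icc le_rfl (by linarith))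
    have h2 := ih (ddiff f) (b - 1) a h1
    have e : b - 1 - (M : ℝ) = b - ((M + 1 : ℕ) : ℝ) := by push_cast; ring
    rwa [e] at h2

lemma ddiff_iter_deriv (M : ℕ) : ∀ (f f' : ℝ → ℝ) (x₀ : ℝ),
    (∀ z, x₀ < z → HasDerivAt f (f' z) z) →
    ∀ y, x₀ < y → HasDerivAt (ddiff^[M] f) (ddiff^[M] f' y) y := by
  induction M with
  | zero => intro f f' x₀ h y hy; simpa using h y hy
  | succ M ih =>
    intro f f' x₀ h y hy
    rw [Function.iterate_succ_apply, Function.iterate_succ_apply]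
    refine ih (ddiff f) (ddiff f') x₀ (fun z hz => ?_) y hy
    have h1 : HasDerivAt (fun w => f (w + 1)) (f' (z + 1)) z :=
      HasDerivAt.comp_add_const _ _ (h (z + 1) (by linarith))
    exact h1.sub (h z hz)

lemma mvt_chain : ∀ (N : ℕ) (D : ℕ → ℝ → ℝ) (x : ℝ),
    ContinuousOn (D 0) (Set.Icc x (x + ((N + 1 : ℕ) : ℝ))) →
    (∀ j (y : ℝ), x < y → HasDerivAt (D j) (D (j + 1) y) y) →
    ∃ ξ : ℝ, x < ξ ∧ ξ < x + ((N + 1 : ℕ) : ℝ) ∧ ddiff^[N + 1] (D 0) x = D (N + 1) ξ := by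
  intro N
  induction N with
  | zero =>
    intro D x hc hd
    have hx1 : x < x + 1 := by linarith
    have hc' : ContinuousOn (D 0) (Set.Icc x (x + 1)) := by
      refine hc.mono ?_
      apply Set.Icc_subset_Icc le_rfl
      push_cast; linarith
    obtain ⟨c, hc1, hc2⟩ := exists_hasDerivAt_eq_slope (D 0) (D 1) hx1 hc'
      (fun y hy => hd 0 y hy.1)
    have hd1 : x + 1 - x = 1 := by ring
    rw [hd1, div_one] at hc2
    exact ⟨c, hc1.1, by push_cast; linarith [hc1.2], by simpa [ddiff] using hc2.symm⟩
  | succ N ih =>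
    intro D x hc hd
    set G := ddiff^[N + 1] (D 0) with hG
    have hGc : ContinuousOn G (Set.Icc x (x + 1)) := by
      have h1 := ddiff_iter_cont (N + 1) (D 0) (x + ((N + 2 : ℕ) : ℝ)) x hc
      have e : x + ((N + 2 : ℕ) : ℝ) - ((N + 1 : ℕ) : ℝ) = x + 1 := by push_cast; ring
      rwa [e] at h1
    have hx1 : x < x + 1 := by linarith
    obtain ⟨η, hη, hη2⟩ := exists_hasDerivAt_eq_slope G (ddiff^[N + 1] (D 1)) hx1 hGc
      (fun y hy => ddiff_iter_deriv (N + 1) (D 0) (D 1) x (hd 0) y hy.1)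
    have hd1 : x + 1 - x = 1 := by ring
    rw [hd1, div_one] at hη2
    obtain ⟨ξ, h1, h2, h3⟩ := ih (fun j => D (j + 1)) η
      (fun y hy => ((hd 1 y (hη.1.trans_le hy.1)).continuousAt).continuousWithinAt)
      (fun j y hy => hd (j + 1) y (hη.1.trans hy))
    refine ⟨ξ, hη.1.trans h1, ?_, ?_⟩
    · have := hη.2
      push_cast at h2 ⊢
      linarith
    · have e2 : ddiff^[N + 1 + 1] (D 0) x = G (x + 1) - G x := by
        rw [Function.iterate_succ_apply']; rfl
      rw [e2, ← hη2, h3]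

lemma ddiff_iter_sum {ι : Type*} (s : Finset ι) : ∀ (N : ℕ) (h : ι → ℝ → ℝ) (x : ℝ),
    ddiff^[N] (fun y => ∑ t ∈ s, h t y) x = ∑ t ∈ s, ddiff^[N] (h t) x := by
  intro N
  induction N with
  | zero => simp
  | succ N ih =>
    intro h x
    rw [Function.iterate_succ_apply]
    have e : ddiff (fun y => ∑ t ∈ s, h t y) = fun y => ∑ t ∈ s, ddiff (h t) y := by
      funext y; simp [ddiff, Finset.sum_sub_distrib]
    rw [e, ih]
    exact Finset.sum_congr rfl fun t _ => by rw [← Function.iterate_succ_apply]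

lemma ddiff_iter_const_mul (c : ℝ) : ∀ (N : ℕ) (f : ℝ → ℝ) (x : ℝ),
    ddiff^[N] (fun y => c * f y) x = c * ddiff^[N] f x := by
  intro N
  induction N with
  | zero => simp
  | succ N ih =>
    intro f x
    rw [Function.iterate_succ_apply]
    have e : ddiff (fun y => c * f y) = fun y => c * ddiff f y := by
      funext y; simp [ddiff]; ring
    rw [e, ih, ← Function.iterate_succ_apply]

lemma ddiff_iter_congr (x₀ : ℝ) : ∀ (N : ℕ) (F G : ℝ → ℝ),
    (∀ y, x₀ ≤ y → F y = G y) → ∀ y, x₀ ≤ y → ddiff^[N] F y = ddiff^[N] G y := by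
  intro N
  induction N with
  | zero => intro F G h y hy; simpa using h y hy
  | succ N ih =>
    intro F G h y hy
    rw [Function.iterate_succ_apply, Function.iterate_succ_apply]
    exact ih (ddiff F) (ddiff G)
      (fun z hz => by simp only [ddiff, h z hz, h (z + 1) (by linarith)]) y hy

lemma fdiffR_eq_ddiff : ∀ (N : ℕ) (u : ℤ → ℝ) (F : ℝ → ℝ),
    (∀ n : ℤ, 0 ≤ n → u n = F n) → ∀ m : ℤ, 0 ≤ m → fdiffR^[N] u m = ddiff^[N] F (m : ℝ) := by
  intro N
  induction N with
  | zero => intro u F h m hm; simpa using h m hm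
  | succ N ih =>
    intro u F h m hm
    rw [Function.iterate_succ_apply, Function.iterate_succ_apply]
    refine ih (fdiffR u) (ddiff F) (fun n hn => ?_) m hm
    simp only [fdiffR, ddiff]
    rw [h n hn, h (n + 1) (by linarith)]
    push_cast
    ring_nf

lemma fdiffR_iter_negshift : ∀ (M : ℕ) (w : ℤ → ℝ) (p : ℤ),
    fdiffR^[M] (fun q => -(w (q - 1))) p = -(fdiffR^[M] w (p - 1)) := by
  intro M
  induction M with
  | zero => simp
  | succ M ih =>
    intro w p
    rw [Function.iterate_succ_apply, Function.iterate_succ_apply]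
    have e : fdiffR (fun q => -(w (q - 1))) = fun q => -(fdiffR w (q - 1)) := by
      funext q
      show -(w (q + 1 - 1)) - -(w (q - 1)) = -(w (q - 1 + 1) - w (q - 1))
      rw [show q + 1 - 1 = q from by ring, show q - 1 + 1 = q from by ring]
      ring
    rw [e, ih]

lemma negLapR_iter (j : ℕ) (v : ℤ → ℝ) (n : ℤ) :
    negLapR^[j] v n = (-1 : ℝ) ^ j * fdiffR^[2 * j] v (n - (j : ℤ)) := by
  induction j generalizing v n with
  | zero => simp
  | succ j ih =>
    rw [Function.iterate_succ_apply, ih]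
    have e : negLapR v = fun q => -(fdiffR^[2] v (q - 1)) := by
      funext q
      show 2 * v q - v (q - 1) - v (q + 1) = -(fdiffR (fdiffR v) (q - 1))
      simp only [fdiffR]
      rw [show q - 1 + 1 = q from by ring]
      ring
    rw [e, fdiffR_iter_negshift]
    have e2 : fdiffR^[2 * j] (fdiffR^[2] v) (n - (j : ℤ) - 1)
        = fdiffR^[2 * (j + 1)] v (n - ((j + 1 : ℕ) : ℤ)) := by
      rw [show 2 * (j + 1) = 2 * j + 2 from by ring,
        Function.iterate_add_apply fdiffR (2 * j) 2 v]
      push_cast; ring_nf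
    rw [e2]
    rw [pow_succ]
    ring

lemma sign_prod (K : ℕ) (hK : 1 ≤ K) : ∀ N, K ≤ N →
    0 < (-1 : ℝ) ^ (N - K) * ∏ i ∈ Finset.range N, ((K : ℝ) - 1 / 2 - (i : ℝ)) := by
  intro N hN
  induction N, hN using Nat.le_induction with
  | base =>
    simp only [Nat.sub_self, pow_zero, one_mul]
    apply Finset.prod_pos
    intro i hi
    have : (i : ℝ) + 1 ≤ (K : ℝ) := by exact_mod_cast Finset.mem_range.1 hi
    linarith
  | succ N hN ih =>
    rw [Finset.prod_range_succ, show N + 1 - K = (N - K) + 1 from by omega, pow_succ]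
    have h2 : (K : ℝ) - 1 / 2 - (N : ℝ) < 0 := by
      have : (K : ℝ) ≤ (N : ℝ) := by exact_mod_cast hN
      linarith
    have h3 := mul_pos ih (neg_pos.mpr h2)
    nlinarith [h3]

/-- the expanded smooth extension of `gseq l` -/
def expG (l : ℕ) : ℝ → ℝ := fun x =>
  ∑ t ∈ (Finset.Icc 1 (l - 1)).powerset,
    ((-1 : ℝ) ^ t.card * ∏ j ∈ t, (j : ℝ)) * x ^ (((l - 1 - t.card : ℕ) : ℝ) + 1 / 2)

lemma gseq_eq_expG (l : ℕ) (hl : 1 ≤ l) (n : ℤ) (hn : 0 ≤ n) : gseq l n = expG l (n : ℝ) := by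
  have hn' : ¬ (n < 0) := not_lt.2 hn
  have hx : (0 : ℝ) ≤ (n : ℝ) := by exact_mod_cast hn
  rw [gseq, if_neg hn', expG]
  have hprod : ∏ j ∈ Finset.Icc 1 (l - 1), ((n : ℝ) - (j : ℝ))
      = ∑ t ∈ (Finset.Icc 1 (l - 1)).powerset,
          ((-1 : ℝ) ^ t.card * ∏ j ∈ t, (j : ℝ)) * (n : ℝ) ^ ((l - 1 - t.card : ℕ)) := by
    have h0 : ∀ j ∈ Finset.Icc 1 (l - 1), (n : ℝ) - (j : ℝ) = -(j : ℝ) + (n : ℝ) := by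
      intro j _; ring
    rw [Finset.prod_congr rfl h0, Finset.prod_add]
    refine Finset.sum_congr rfl fun t ht => ?_
    have ht' := Finset.mem_powerset.1 ht
    have hcard : (Finset.Icc 1 (l - 1) \ t).card = l - 1 - t.card := by
      rw [Finset.card_sdiff_of_subset ht', Nat.card_Icc]; omega
    rw [Finset.prod_const, hcard]
    congr 1
    calc ∏ j ∈ t, -(j : ℝ) = ∏ j ∈ t, (-1 : ℝ) * (j : ℝ) := by
          refine Finset.prod_congr rfl fun j _ => by ring
      _ = (-1 : ℝ) ^ t.card * ∏ j ∈ t, (j : ℝ) := by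
          rw [Finset.prod_mul_distrib, Finset.prod_const]
  rw [hprod, Finset.mul_sum]
  refine Finset.sum_congr rfl fun t _ => ?_
  rw [Real.sqrt_eq_rpow, Real.rpow_add' hx (by positivity), Real.rpow_natCast]
  ring

lemma mono_pos (K N : ℕ) (hK : 1 ≤ K) (hKN : K ≤ N) (x : ℝ) (hx : 0 ≤ x) :
    0 < (-1 : ℝ) ^ (N - K) * ddiff^[N] (fun y => y ^ ((K : ℝ) - 1 / 2)) x := by
  obtain ⟨N', rfl⟩ : ∃ N', N = N' + 1 := ⟨N - 1, by omega⟩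
  set a : ℝ := (K : ℝ) - 1 / 2 with ha
  have ha0 : 0 < a := by
    have : (1 : ℝ) ≤ (K : ℝ) := by exact_mod_cast hK
    rw [ha]; linarith
  have hcont : ContinuousOn
      ((fun (j : ℕ) (y : ℝ) => (∏ i ∈ Finset.range j, (a - (i : ℝ))) * y ^ (a - (j : ℝ))) 0)
      (Set.Icc x (x + ((N' + 1 : ℕ) : ℝ))) := by
    intro y hy
    exact ContinuousAt.continuousWithinAt <| ContinuousAt.mul continuousAt_const
      (Real.continuousAt_rpow_const y _ (Or.inr (by simp; linarith)))
  have hder : ∀ (j : ℕ) (y : ℝ), x < y →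
      HasDerivAt ((fun (j : ℕ) (y : ℝ) => (∏ i ∈ Finset.range j, (a - (i : ℝ))) * y ^ (a - (j : ℝ))) j)
        ((fun (j : ℕ) (y : ℝ) => (∏ i ∈ Finset.range j, (a - (i : ℝ))) * y ^ (a - (j : ℝ))) (j + 1) y) y := by
    intro j y hy
    have hy0 : (0 : ℝ) < y := lt_of_le_of_lt hx hy
    have h := (Real.hasDerivAt_rpow_const (x := y) (p := a - (j : ℝ))
      (Or.inl hy0.ne')).const_mul (∏ i ∈ Finset.range j, (a - (i : ℝ)))
    refine h.congr_deriv ?_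
    beta_reduce
    rw [Finset.prod_range_succ,
      show a - ((j + 1 : ℕ) : ℝ) = a - (j : ℝ) - 1 from by push_cast; ring]
    ring
  obtain ⟨ξ, hξ1, hξ2, hξ3⟩ := mvt_chain N'
    (fun j => fun y => (∏ i ∈ Finset.range j, (a - (i : ℝ))) * y ^ (a - (j : ℝ))) x
    hcont hder
  have e0 : (fun y : ℝ => y ^ a)
      = (fun y : ℝ => (∏ i ∈ Finset.range 0, (a - (i : ℝ))) * y ^ (a - ((0 : ℕ) : ℝ))) := by
    funext y; simp
  rw [e0, hξ3]
  have hξpos : (0 : ℝ) < ξ := lt_of_le_of_lt hx hξ1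
  have h1 := sign_prod K hK (N' + 1) hKN
  have h2 : (0 : ℝ) < ξ ^ (a - ((N' + 1 : ℕ) : ℝ)) := Real.rpow_pos_of_pos hξpos _
  have h3 := mul_pos h1 h2
  have e1 : ∀ i : ℕ, a - (i : ℝ) = (K : ℝ) - 1 / 2 - (i : ℝ) := fun i => by rw [ha]
  simp only [e1] at *
  nlinarith [h3]

lemma key (l : ℕ) (hl : 1 ≤ l) (N : ℕ) (hN : l + 1 ≤ N) (m : ℤ) (hm : 0 ≤ m) :
    0 < (-1 : ℝ) ^ (N - l) * fdiffR^[N] (gseq l) m := by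
  have hm' : (0 : ℝ) ≤ (m : ℝ) := by exact_mod_cast hm
  rw [fdiffR_eq_ddiff N (gseq l) (expG l) (fun n hn => gseq_eq_expG l hl n hn) m hm]
  have hsum : ddiff^[N] (expG l) (m : ℝ)
      = ∑ t ∈ (Finset.Icc 1 (l - 1)).powerset,
          ((-1 : ℝ) ^ t.card * ∏ j ∈ t, (j : ℝ)) *
            ddiff^[N] (fun y : ℝ => y ^ (((l - 1 - t.card : ℕ) : ℝ) + 1 / 2)) (m : ℝ) := by
    have e : expG l = fun x => ∑ t ∈ (Finset.Icc 1 (l - 1)).powerset,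
        (fun (t : Finset ℕ) (x : ℝ) => ((-1 : ℝ) ^ t.card * ∏ j ∈ t, (j : ℝ)) *
          x ^ (((l - 1 - t.card : ℕ) : ℝ) + 1 / 2)) t x := rfl
    rw [e, ddiff_iter_sum]
    exact Finset.sum_congr rfl fun t _ => ddiff_iter_const_mul _ N _ _
  rw [hsum, Finset.mul_sum]
  apply Finset.sum_pos
  · intro t ht
    have ht' := Finset.mem_powerset.1 ht
    have hcard : t.card ≤ l - 1 := by
      have := Finset.card_le_card ht'
      rwa [Nat.card_Icc, Nat.add_sub_cancel] at this
    set K := l - t.card with hKdef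
    have hK1 : 1 ≤ K := by omega
    have hKN : K ≤ N := by omega
    have e3 : ((l - 1 - t.card : ℕ) : ℝ) + 1 / 2 = (K : ℝ) - 1 / 2 := by
      rw [show l - 1 - t.card = K - 1 from by omega]
      have : ((K - 1 : ℕ) : ℝ) = (K : ℝ) - 1 := by
        rw [Nat.cast_sub hK1]; norm_num
      rw [this]; ring
    have efun : (fun y : ℝ => y ^ (((l - 1 - t.card : ℕ) : ℝ) + 1 / 2))
        = (fun y : ℝ => y ^ ((K : ℝ) - 1 / 2)) := by
      funext y; rw [e3]
    rw [efun]
    have hP : (0 : ℝ) < ∏ j ∈ t, (j : ℝ) := by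
      apply Finset.prod_pos
      intro j hj
      have := (Finset.mem_Icc.1 (ht' hj)).1
      exact_mod_cast Nat.lt_of_lt_of_le Nat.zero_lt_one this
    have hmono := mono_pos K N hK1 hKN (m : ℝ) hm'
    have erw : (-1 : ℝ) ^ (N - l) * (((-1 : ℝ) ^ t.card * ∏ j ∈ t, (j : ℝ)) *
          ddiff^[N] (fun y : ℝ => y ^ ((K : ℝ) - 1 / 2)) (m : ℝ))
        = ((-1 : ℝ) ^ (N - K) * ddiff^[N] (fun y : ℝ => y ^ ((K : ℝ) - 1 / 2)) (m : ℝ))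
            * ∏ j ∈ t, (j : ℝ) := by
      rw [show N - K = (N - l) + t.card from by omega, pow_add]
      ring
    rw [erw]
    exact mul_pos hmono hP
  · exact ⟨∅, Finset.empty_mem_powerset _⟩


/-- claim (b) of the proof of Theorem 4: positivity of
`(-Δ)^{ℓ-k} ∂^k g^{(ℓ)}` on `[ℓ-k, ∞)`; in particular `(-Δ)^ℓ g^{(ℓ)} > 0` on `[ℓ, ∞)`. -/
theorem statement18 (l : ℕ) (hl : 1 ≤ l) :
    (∀ k : ℕ, k < l → ∀ n : ℤ, (l : ℤ) - (k : ℤ) ≤ n →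
      0 < negLapR^[l - k] (fdiffR^[k] (gseq l)) n) ∧
    (∀ n : ℤ, (l : ℤ) ≤ n → 0 < negLapR^[l] (gseq l) n) := by
  have main : ∀ k : ℕ, k < l → ∀ n : ℤ, (l : ℤ) - (k : ℤ) ≤ n →
      0 < negLapR^[l - k] (fdiffR^[k] (gseq l)) n := by
    intro k hk n hn
    rw [negLapR_iter (l - k) (fdiffR^[k] (gseq l)) n]
    have e := congrFun (Function.iterate_add_apply fdiffR (2 * (l - k)) k (gseq l))
      (n - ((l - k : ℕ) : ℤ))
    rw [← e]
    have h1 : l + 1 ≤ 2 * (l - k) + k := by omega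
    have h2 : 2 * (l - k) + k - l = l - k := by omega
    have hm : (0 : ℤ) ≤ n - ((l - k : ℕ) : ℤ) := by omega
    have := key l hl (2 * (l - k) + k) h1 (n - ((l - k : ℕ) : ℤ)) hm
    rw [h2] at this
    exact this
  refine ⟨main, fun n hn => ?_⟩
  have := main 0 hl n (by simpa using hn)
  simpa using this


end HRB
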